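/- If u, v : ℝ² → ℝ are twice continuously differentiable and satisfy the Bäcklund system u_x + v_x = √2·exp((u−v)/2) and u_t − v_t = √2·exp((u+v)/2), then u satisfies the Liouville equation u_xt = exp(u) and v satisfies v_xt = 0. -/

import Mathlib

/-- Partial derivative with respect to the first variable (x). -/
noncomputable def px (f : ℝ → ℝ → ℝ) (x t : ℝ) : ℝ :=
  deriv (fun x' => f x' t) x

/-- Partial derivative with respect to the second variable (t). -/
noncomputable def pt (f : ℝ → ℝ → ℝ) (x t : ℝ) : ℝ :=
  deriv (fun t' => f x t') t

section aux

variable {f : ℝ → ℝ → ℝ}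

lemma hasDerivAt_slice_x (hf : ContDiff ℝ 2 (Function.uncurry f)) (x t : ℝ) :
    HasDerivAt (fun x' => f x' t)
      (fderiv ℝ (Function.uncurry f) (x, t) (1, 0)) x := by
  have h1 : HasDerivAt (fun x' : ℝ => ((x', t) : ℝ × ℝ)) (1, 0) x := by
    have := ((hasDerivAt_id x).prodMk (hasDerivAt_const x t))
    simpa using this
  have h2 := ((hf.differentiable (by norm_num)).differentiableAt
    (x := (x, t))).hasFDerivAt
  exact h2.comp_hasDerivAt x h1

lemma hasDerivAt_slice_t (hf : ContDiff ℝ 2 (Function.uncurry f)) (x t : ℝ) :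
    HasDerivAt (fun t' => f x t')
      (fderiv ℝ (Function.uncurry f) (x, t) (0, 1)) t := by
  have h1 : HasDerivAt (fun t' : ℝ => ((x, t') : ℝ × ℝ)) (0, 1) t := by
    have := ((hasDerivAt_const t x).prodMk (hasDerivAt_id t))
    simpa using this
  have h2 := ((hf.differentiable (by norm_num)).differentiableAt
    (x := (x, t))).hasFDerivAt
  exact h2.comp_hasDerivAt t h1

lemma px_eq (hf : ContDiff ℝ 2 (Function.uncurry f)) (x t : ℝ) :
    px f x t = fderiv ℝ (Function.uncurry f) (x, t) (1, 0) :=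
  (hasDerivAt_slice_x hf x t).deriv

lemma pt_eq (hf : ContDiff ℝ 2 (Function.uncurry f)) (x t : ℝ) :
    pt f x t = fderiv ℝ (Function.uncurry f) (x, t) (0, 1) :=
  (hasDerivAt_slice_t hf x t).deriv

lemma hasDerivAt_px_t (hf : ContDiff ℝ 2 (Function.uncurry f)) (x t : ℝ) :
    HasDerivAt (fun t' => px f x t')
      (fderiv ℝ (fderiv ℝ (Function.uncurry f)) (x, t) (0, 1) (1, 0)) t := by
  have hG : ContDiff ℝ 1 (fderiv ℝ (Function.uncurry f)) :=
    hf.fderiv_right (by norm_num)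
  have h1 : HasDerivAt (fun t' : ℝ => ((x, t') : ℝ × ℝ)) (0, 1) t := by
    have := ((hasDerivAt_const t x).prodMk (hasDerivAt_id t))
    simpa using this
  have h2 := ((hG.differentiable one_ne_zero).differentiableAt (x := (x, t))).hasFDerivAt
  have h3 : HasDerivAt (fun t' => fderiv ℝ (Function.uncurry f) (x, t'))
      (fderiv ℝ (fderiv ℝ (Function.uncurry f)) (x, t) (0, 1)) t :=
    h2.comp_hasDerivAt t h1
  have h4 := h3.clm_apply (hasDerivAt_const t ((1, 0) : ℝ × ℝ))
  simp only [map_zero, add_zero] at h4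
  exact h4.congr_deriv (by simp) |>.congr_of_eventuallyEq
    (Filter.Eventually.of_forall fun t' => px_eq hf x t')

lemma hasDerivAt_pt_x (hf : ContDiff ℝ 2 (Function.uncurry f)) (x t : ℝ) :
    HasDerivAt (fun x' => pt f x' t)
      (fderiv ℝ (fderiv ℝ (Function.uncurry f)) (x, t) (1, 0) (0, 1)) x := by
  have hG : ContDiff ℝ 1 (fderiv ℝ (Function.uncurry f)) :=
    hf.fderiv_right (by norm_num)
  have h1 : HasDerivAt (fun x' : ℝ => ((x', t) : ℝ × ℝ)) (1, 0) x := by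
    have := ((hasDerivAt_id x).prodMk (hasDerivAt_const x t))
    simpa using this
  have h2 := ((hG.differentiable one_ne_zero).differentiableAt (x := (x, t))).hasFDerivAt
  have h3 : HasDerivAt (fun x' => fderiv ℝ (Function.uncurry f) (x', t))
      (fderiv ℝ (fderiv ℝ (Function.uncurry f)) (x, t) (1, 0)) x :=
    h2.comp_hasDerivAt x h1
  have h4 := h3.clm_apply (hasDerivAt_const x ((0, 1) : ℝ × ℝ))
  simp only [map_zero, add_zero] at h4
  exact h4.congr_deriv (by simp) |>.congr_of_eventuallyEq
    (Filter.Eventually.of_forall fun x' => pt_eq hf x' t)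

end aux

theorem stmt_5 (u v : ℝ → ℝ → ℝ)
    (hu : ContDiff ℝ 2 (Function.uncurry u))
    (hv : ContDiff ℝ 2 (Function.uncurry v))
    (hBT1 : ∀ x t, px u x t + px v x t = Real.sqrt 2 * Real.exp ((u x t - v x t) / 2))
    (hBT2 : ∀ x t, pt u x t - pt v x t = Real.sqrt 2 * Real.exp ((u x t + v x t) / 2)) :
    (∀ x t, pt (px u) x t = Real.exp (u x t)) ∧ (∀ x t, pt (px v) x t = 0) := by
  have key : ∀ x t, pt (px u) x t = Real.exp (u x t) ∧ pt (px v) x t = 0 := by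
    intro x t
    set A := fderiv ℝ (fderiv ℝ (Function.uncurry u)) (x, t) (0, 1) (1, 0) with hA
    set B := fderiv ℝ (fderiv ℝ (Function.uncurry v)) (x, t) (0, 1) (1, 0) with hB
    -- derivatives of u, v in each variable at current point (as HasDerivAt)
    have hut := hasDerivAt_slice_t hu x t
    have hvt := hasDerivAt_slice_t hv x t
    have hux := hasDerivAt_slice_x hu x t
    have hvx := hasDerivAt_slice_x hv x t
    -- equation 1: differentiate BT1 in t
    have hL1 : HasDerivAt (fun t' => px u x t' + px v x t') (A + B) t :=
      (hasDerivAt_px_t hu x t).add (hasDerivAt_px_t hv x t)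
    have hR1 : HasDerivAt (fun t' => Real.sqrt 2 * Real.exp ((u x t' - v x t')/2))
        (Real.sqrt 2 * Real.exp ((u x t - v x t)/2) *
          ((pt u x t - pt v x t)/2)) t := by
      have h := (((hut.sub hvt).div_const 2).exp).const_mul (Real.sqrt 2)
      rw [pt_eq hu, pt_eq hv]
      refine h.congr_deriv ?_
      simp only [Pi.sub_apply, Pi.add_apply]; ring
    have heq1 : A + B = Real.exp (u x t) := by
      have := hL1.unique (hR1.congr_of_eventuallyEq
        (Filter.Eventually.of_forall fun t' => hBT1 x t'))
      rw [this, hBT2 x t]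
      rw [show Real.sqrt 2 * Real.exp ((u x t - v x t)/2) *
            ((Real.sqrt 2 * Real.exp ((u x t + v x t)/2))/2)
          = (Real.sqrt 2 * Real.sqrt 2) *
            (Real.exp ((u x t - v x t)/2) * Real.exp ((u x t + v x t)/2)) / 2 from by ring,
        Real.mul_self_sqrt (by norm_num : (0:ℝ) ≤ 2), ← Real.exp_add,
        show (u x t - v x t)/2 + (u x t + v x t)/2 = u x t from by ring]
      ring
    -- equation 2: differentiate BT2 in x
    have hA' : fderiv ℝ (fderiv ℝ (Function.uncurry u)) (x, t) (1, 0) (0, 1) = A := by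
      rw [hA]; exact ((hu.contDiffAt.isSymmSndFDerivAt (by simp [minSmoothness_of_isRCLikeNormedField])).eq _ _)
    have hB' : fderiv ℝ (fderiv ℝ (Function.uncurry v)) (x, t) (1, 0) (0, 1) = B := by
      rw [hB]; exact ((hv.contDiffAt.isSymmSndFDerivAt (by simp [minSmoothness_of_isRCLikeNormedField])).eq _ _)
    have hL2 : HasDerivAt (fun x' => pt u x' t - pt v x' t) (A - B) x := by
      have := (hasDerivAt_pt_x hu x t).sub (hasDerivAt_pt_x hv x t)
      rwa [hA', hB'] at this
    have hR2 : HasDerivAt (fun x' => Real.sqrt 2 * Real.exp ((u x' t + v x' t)/2))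
        (Real.sqrt 2 * Real.exp ((u x t + v x t)/2) *
          ((px u x t + px v x t)/2)) x := by
      have h := (((hux.add hvx).div_const 2).exp).const_mul (Real.sqrt 2)
      rw [px_eq hu, px_eq hv]
      refine h.congr_deriv ?_
      simp only [Pi.sub_apply, Pi.add_apply]; ring
    have heq2 : A - B = Real.exp (u x t) := by
      have := hL2.unique (hR2.congr_of_eventuallyEq
        (Filter.Eventually.of_forall fun x' => hBT2 x' t))
      rw [this, hBT1 x t]
      rw [show Real.sqrt 2 * Real.exp ((u x t + v x t)/2) *
            ((Real.sqrt 2 * Real.exp ((u x t - v x t)/2))/2)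
          = (Real.sqrt 2 * Real.sqrt 2) *
            (Real.exp ((u x t + v x t)/2) * Real.exp ((u x t - v x t)/2)) / 2 from by ring,
        Real.mul_self_sqrt (by norm_num : (0:ℝ) ≤ 2), ← Real.exp_add,
        show (u x t + v x t)/2 + (u x t - v x t)/2 = u x t from by ring]
      ring
    have hptpxu : pt (px u) x t = A := (hasDerivAt_px_t hu x t).deriv
    have hptpxv : pt (px v) x t = B := (hasDerivAt_px_t hv x t).deriv
    constructor
    · rw [hptpxu]; linarith
    · rw [hptpxv]; linarith
  exact ⟨fun x t => (key x t).1, fun x t => (key x t).2⟩
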